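/- Let η₀, η₁ : S¹ → ℝ^d be H²-regular closed curves with constant-speed parametrization (|∂_s η(s)| = L(η) for all s, where L is the length) and mean zero, normalized so that ‖η₀ − η₁‖_{L²(S¹)} = 1. Then any C¹ path η : [0,1] → A with η(0)=η₀, η(1)=η₁ staying in the manifold A of constant-speed closed curves has Riemannian length ∫₀¹ ‖∂_t η(t)‖_{L²(S¹)} √(L(η(t))) dt at least m := (1/2)·min(L(η₀), ‖η₀‖²_{L²(S¹)}, 2). In particular the induced Riemannian distance on A is non-degenerate. -/

import Mathlib

open Real MeasureTheory intervalIntegral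
noncomputable section
set_option maxHeartbeats 4000000


private lemma rpow_subadd {x y : ℝ} (hx : 0 ≤ x) (hy : 0 ≤ y) {p : ℝ} (hp : 0 ≤ p)
    (hp1 : p ≤ 1) : (x + y) ^ p ≤ x ^ p + y ^ p := by
  have h := NNReal.rpow_add_le_add_rpow x.toNNReal y.toNNReal hp hp1
  have h' := congrArg (fun z : NNReal => (z : ℝ)) (rfl : x.toNNReal + y.toNNReal = x.toNNReal + y.toNNReal)
  have hxy : ((x.toNNReal + y.toNNReal : NNReal) : ℝ) = x + y := by
    simp [Real.coe_toNNReal, hx, hy]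
  calc (x + y) ^ p = (((x.toNNReal + y.toNNReal : NNReal) : ℝ)) ^ p := by rw [hxy]
    _ = (((x.toNNReal + y.toNNReal : NNReal) ^ p : NNReal) : ℝ) := by
        rw [NNReal.coe_rpow]
    _ ≤ ((x.toNNReal ^ p + y.toNNReal ^ p : NNReal) : ℝ) := by exact_mod_cast h
    _ = x ^ p + y ^ p := by
        push_cast [NNReal.coe_rpow, Real.coe_toNNReal _ hx, Real.coe_toNNReal _ hy]
        ring

private lemma cs_int (f g : ℝ → ℝ) (hf : Continuous f) (hg : Continuous g)
    (hf0 : ∀ s, 0 ≤ f s) (hg0 : ∀ s, 0 ≤ g s) :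
    (∫ s in (0:ℝ)..1, f s * g s) ≤
      Real.sqrt (∫ s in (0:ℝ)..1, f s ^ 2) * Real.sqrt (∫ s in (0:ℝ)..1, g s ^ 2) := by
  set A := ∫ s in (0:ℝ)..1, f s ^ 2 with hA
  set B := ∫ s in (0:ℝ)..1, g s ^ 2 with hB
  have hA0 : 0 ≤ A := intervalIntegral.integral_nonneg (by norm_num)
    (fun u _ => sq_nonneg _)
  have hB0 : 0 ≤ B := intervalIntegral.integral_nonneg (by norm_num)
    (fun u _ => sq_nonneg _)
  have key : ∀ lam : ℝ, 0 < lam →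
      (∫ s in (0:ℝ)..1, f s * g s) ≤ (lam * A + B / lam) / 2 := by
    intro lam hlam
    have hpt : ∀ s, f s * g s ≤ (lam * f s ^ 2 + g s ^ 2 / lam) / 2 := by
      intro s
      rw [le_div_iff₀ (by norm_num : (0:ℝ) < 2), ← sub_nonneg]
      have e : lam * f s ^ 2 + g s ^ 2 / lam - f s * g s * 2 = (lam * f s - g s) ^ 2 / lam := by
        field_simp
        ring
      rw [e]
      positivity
    have hint : (∫ s in (0:ℝ)..1, f s * g s) ≤
        ∫ s in (0:ℝ)..1, (lam * f s ^ 2 + g s ^ 2 / lam) / 2 := by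
      apply intervalIntegral.integral_mono_on (by norm_num)
        ((hf.mul hg).intervalIntegrable _ _)
        ((((continuous_const.mul (hf.pow 2)).add ((hg.pow 2).div_const lam)).div_const 2).intervalIntegrable _ _)
        (fun s _ => hpt s)
    calc (∫ s in (0:ℝ)..1, f s * g s) ≤ ∫ s in (0:ℝ)..1, (lam * f s ^ 2 + g s ^ 2 / lam) / 2 := hint
      _ = (lam * A + B / lam) / 2 := by
          rw [intervalIntegral.integral_div, intervalIntegral.integral_add (f := fun s => lam * f s ^ 2) (g := fun s => g s ^ 2 / lam)
            ((continuous_const.mul (hf.pow 2)).intervalIntegrable _ _)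
            (((hg.pow 2).div_const lam).intervalIntegrable _ _),
            intervalIntegral.integral_const_mul, intervalIntegral.integral_div]
  apply le_of_forall_pos_le_add
  intro δ hδ
  rcases eq_or_lt_of_le hA0 with hA0' | hApos
  · have hlam : (0:ℝ) < (B + 1) / δ := by positivity
    have := key _ hlam
    have hb : (B + 1) / δ ≠ 0 := ne_of_gt hlam
    have h2 : ((B + 1) / δ * A + B / ((B + 1) / δ)) / 2 ≤ δ := by
      rw [← hA0']
      rw [div_div_eq_mul_div]
      have h3 : B * δ / (B + 1) ≤ δ := by
        rw [div_le_iff₀ (by linarith)]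
        nlinarith
      nlinarith
    have h4 : (0:ℝ) ≤ Real.sqrt A * Real.sqrt B := by positivity
    linarith
  · have hsA : 0 < Real.sqrt A := Real.sqrt_pos.2 hApos
    have hSA : Real.sqrt A * Real.sqrt A = A := Real.mul_self_sqrt hA0
    have hSB : Real.sqrt B * Real.sqrt B = B := Real.mul_self_sqrt hB0
    have hSB0 : 0 ≤ Real.sqrt B := Real.sqrt_nonneg _
    set SA := Real.sqrt A with hSAdef
    set SB := Real.sqrt B with hSBdef
    set lam := (SB + δ / SA) / SA with hlamdef
    have hlam : 0 < lam := by positivity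
    have e1 : lam * A = SA * SB + δ := by
      rw [hlamdef, ← hSA]
      field_simp
    have e2 : B / lam ≤ SA * SB := by
      rw [div_le_iff₀ hlam, hlamdef]
      have e3 : SA * SB * ((SB + δ / SA) / SA) = SB * SB + SB * δ / SA := by
        field_simp
      rw [e3, ← hSB]
      have : 0 ≤ SB * δ / SA := by positivity
      linarith
    linarith [key lam hlam]

private lemma cs_inner {E : Type*} [NormedAddCommGroup E] [InnerProductSpace ℝ E]
    (u w : ℝ → E) (hu : Continuous u) (hw : Continuous w) :
    |∫ s in (0:ℝ)..1, (inner ℝ (u s) (w s) : ℝ)| ≤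
      Real.sqrt (∫ s in (0:ℝ)..1, ‖u s‖ ^ 2) * Real.sqrt (∫ s in (0:ℝ)..1, ‖w s‖ ^ 2) := by
  have h1 : |∫ s in (0:ℝ)..1, (inner ℝ (u s) (w s) : ℝ)| ≤
      ∫ s in (0:ℝ)..1, |(inner ℝ (u s) (w s) : ℝ)| :=
    intervalIntegral.abs_integral_le_integral_abs (by norm_num)
  have h2 : (∫ s in (0:ℝ)..1, |(inner ℝ (u s) (w s) : ℝ)|) ≤
      ∫ s in (0:ℝ)..1, ‖u s‖ * ‖w s‖ := by
    apply intervalIntegral.integral_mono_on (by norm_num)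
      ((hu.inner hw).abs.intervalIntegrable _ _)
      ((hu.norm.mul hw.norm).intervalIntegrable _ _)
    exact fun s _ => abs_real_inner_le_norm _ _
  exact (h1.trans h2).trans
    (cs_int _ _ hu.norm hw.norm (fun s => norm_nonneg _) (fun s => norm_nonneg _))

private lemma param_deriv (φ ψ : ℝ → ℝ → ℝ)
    (hd : ∀ t s, HasDerivAt (fun u => φ u s) (ψ t s) t)
    (hφ : Continuous fun p : ℝ × ℝ => φ p.1 p.2)
    (hψ : Continuous fun p : ℝ × ℝ => ψ p.1 p.2) (t₀ : ℝ) :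
    HasDerivAt (fun t => ∫ s in (0:ℝ)..1, φ t s) (∫ s in (0:ℝ)..1, ψ t₀ s) t₀ := by
  obtain ⟨C, hC⟩ := (IsCompact.exists_bound_of_continuousOn
    ((isCompact_Icc (a := t₀ - 1) (b := t₀ + 1)).prod (isCompact_Icc (a := (0:ℝ)) (b := 1)))
    hψ.continuousOn)
  have hmeas : ∀ x : ℝ, AEStronglyMeasurable (φ x) (volume.restrict (Set.uIoc (0:ℝ) 1)) := by
    intro x
    exact (hφ.comp (continuous_const.prodMk continuous_id)).aestronglyMeasurable
  have hmeas' : AEStronglyMeasurable (ψ t₀) (volume.restrict (Set.uIoc (0:ℝ) 1)) := by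
    exact ((hψ.comp (continuous_const.prodMk continuous_id))).aestronglyMeasurable
  have := intervalIntegral.hasDerivAt_integral_of_dominated_loc_of_deriv_le
    (F := φ) (F' := ψ) (x₀ := t₀) (a := 0) (b := 1) (bound := fun _ => C)
    (μ := volume) (Metric.ball_mem_nhds t₀ zero_lt_one)
    (Filter.Eventually.of_forall hmeas)
    ((hφ.comp (continuous_const.prodMk continuous_id)).intervalIntegrable _ _)
    hmeas'
    (Filter.Eventually.of_forall (fun s hs x hx => by
      have hs' : s ∈ Set.Icc (0:ℝ) 1 := by
        rw [Set.uIoc_of_le (by norm_num : (0:ℝ) ≤ 1)] at hs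
        exact Set.mem_Icc_of_Ioc hs
      have hx' : x ∈ Set.Icc (t₀ - 1) (t₀ + 1) := by
        have := mem_ball_iff_norm.1 hx
        rw [Real.norm_eq_abs] at this
        have := abs_lt.1 this
        constructor <;> linarith [this.1, this.2]
      exact hC (x, s) (Set.mk_mem_prod hx' hs')))
    intervalIntegrable_const
    (Filter.Eventually.of_forall (fun s _ x _ => hd x s))
  exact this.2

private lemma poincare {E : Type*} [NormedAddCommGroup E] [NormedSpace ℝ E] [CompleteSpace E]
    (γ : ℝ → E) (Λ : ℝ) (D : ℝ → E)
    (hD : ∀ s, HasDerivAt γ (D s) s) (hper : Function.Periodic γ 1)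
    (hmean : (∫ s in (0:ℝ)..1, γ s) = 0) (hb : ∀ s, ‖D s‖ ≤ Λ) :
    ∀ s, ‖γ s‖ ≤ Λ / 2 := by
  have hΛ0 : 0 ≤ Λ := le_trans (norm_nonneg (D 0)) (hb 0)
  have hdiff : Differentiable ℝ γ := fun x => (hD x).differentiableAt
  have hγc : Continuous γ := hdiff.continuous
  have lip : ∀ a b : ℝ, a ≤ b → ‖γ b - γ a‖ ≤ Λ * (b - a) := by
    intro a b hab
    have := norm_image_sub_le_of_norm_deriv_le_segment' (f := γ) (f' := D) (C := Λ)
      (a := a) (b := b) (fun x _ => (hD x).hasDerivWithinAt) (fun x _ => hb x)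
      b (Set.right_mem_Icc.2 hab)
    exact this
  have key : ∀ s σ : ℝ, ‖γ s - γ σ‖ ≤ Λ / 2 := by
    intro s σ
    have hkr := abs_sub_round (σ - s)
    have hkr' := abs_le.1 hkr
    set k := round (σ - s) with hk
    have hγσ : γ (σ - (k:ℝ)) = γ σ := by
      have := hper.sub_zsmul_eq k (x := σ)
      simpa using this
    rw [← hγσ]
    rcases le_total s (σ - (k:ℝ)) with h | h
    · rw [norm_sub_rev]
      have h2 := lip s (σ - (k:ℝ)) h
      nlinarith [h2, hkr'.1, hkr'.2, hΛ0]
    · have h2 := lip (σ - (k:ℝ)) s h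
      nlinarith [h2, hkr'.1, hkr'.2, hΛ0]
  intro s
  have e : γ s = ∫ σ in (0:ℝ)..1, (γ s - γ σ) := by
    rw [intervalIntegral.integral_sub intervalIntegrable_const
      (hγc.intervalIntegrable _ _), hmean, intervalIntegral.integral_const]
    simp
  calc ‖γ s‖ = ‖∫ σ in (0:ℝ)..1, (γ s - γ σ)‖ := by rw [← e]
    _ ≤ ∫ σ in (0:ℝ)..1, ‖γ s - γ σ‖ :=
        intervalIntegral.norm_integral_le_integral_norm (by norm_num)
    _ ≤ ∫ σ in (0:ℝ)..1, Λ / 2 := by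
        apply intervalIntegral.integral_mono_on (by norm_num)
          ((continuous_const.sub hγc).norm.intervalIntegrable _ _)
          intervalIntegrable_const (fun σ _ => key s σ)
    _ = Λ / 2 := by simp


/-- Non-degeneracy of the Riemannian distance on the manifold `A` of constant-speed
closed curves: any C¹ path between two normalized curves has Riemannian length at least
`m = (1/2) min(L(η₀), ‖η₀‖²_{L²}, 2)`. -/
theorem stmt0 (d : ℕ)
    (η₀ η₁ : ℝ → EuclideanSpace ℝ (Fin d))
    (hη₀ : ContDiff ℝ 2 η₀) (hη₁ : ContDiff ℝ 2 η₁)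
    (hper₀ : Function.Periodic η₀ 1) (hper₁ : Function.Periodic η₁ 1)
    (hmean₀ : (∫ s in (0:ℝ)..1, η₀ s) = 0) (hmean₁ : (∫ s in (0:ℝ)..1, η₁ s) = 0)
    (L₀ L₁ : ℝ)
    (hL₀ : L₀ = ∫ s in (0:ℝ)..1, ‖deriv η₀ s‖)
    (hL₁ : L₁ = ∫ s in (0:ℝ)..1, ‖deriv η₁ s‖)
    (hspeed₀ : ∀ s, ‖deriv η₀ s‖ = L₀) (hspeed₁ : ∀ s, ‖deriv η₁ s‖ = L₁)
    (hL₀pos : 0 < L₀) (hL₁pos : 0 < L₁)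
    (hnorm : (∫ s in (0:ℝ)..1, ‖η₀ s - η₁ s‖ ^ 2) = 1)
    (η : ℝ → ℝ → EuclideanSpace ℝ (Fin d))
    (hC1 : ContDiff ℝ 1 (fun p : ℝ × ℝ => η p.1 p.2))
    (h0 : η 0 = η₀) (h1 : η 1 = η₁)
    (hA : ∀ t ∈ Set.Icc (0:ℝ) 1,
      Function.Periodic (η t) 1 ∧ (∫ s in (0:ℝ)..1, η t s) = 0 ∧
      (0 < ∫ s in (0:ℝ)..1, ‖deriv (η t) s‖) ∧
      ∀ s, ‖deriv (η t) s‖ = ∫ u in (0:ℝ)..1, ‖deriv (η t) u‖) :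
    (1/2) * min (min L₀ (∫ s in (0:ℝ)..1, ‖η₀ s‖ ^ 2)) 2 ≤
      ∫ t in (0:ℝ)..1,
        Real.sqrt (∫ s in (0:ℝ)..1, ‖deriv (fun u => η u s) t‖ ^ 2) *
          Real.sqrt (∫ u in (0:ℝ)..1, ‖deriv (η t) u‖) := by
  classical
  have hfd : Differentiable ℝ (fun p : ℝ × ℝ => η p.1 p.2) := hC1.differentiable one_ne_zero
  have hfc : Continuous (fun p : ℝ × ℝ => η p.1 p.2) := hC1.continuous
  set Dt : ℝ → ℝ → EuclideanSpace ℝ (Fin d) :=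
    fun t s => fderiv ℝ (fun p : ℝ × ℝ => η p.1 p.2) (t, s) (1, 0) with hDtdef
  set Ds : ℝ → ℝ → EuclideanSpace ℝ (Fin d) :=
    fun t s => fderiv ℝ (fun p : ℝ × ℝ => η p.1 p.2) (t, s) (0, 1) with hDsdef
  have hDt : ∀ t s, HasDerivAt (fun u => η u s) (Dt t s) t := by
    intro t s
    have h1 : HasDerivAt (fun u : ℝ => (u, s)) ((1:ℝ), (0:ℝ)) t :=
      (hasDerivAt_id t).prodMk (hasDerivAt_const t s)
    exact (hfd (t, s)).hasFDerivAt.comp_hasDerivAt t h1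
  have hDs : ∀ t s, HasDerivAt (η t) (Ds t s) s := by
    intro t s
    have h1 : HasDerivAt (fun σ : ℝ => (t, σ)) ((0:ℝ), (1:ℝ)) s :=
      (hasDerivAt_const s t).prodMk (hasDerivAt_id s)
    exact (hfd (t, s)).hasFDerivAt.comp_hasDerivAt s h1
  have hDtc : Continuous fun p : ℝ × ℝ => Dt p.1 p.2 := by
    simp only [hDtdef]
    exact (hC1.continuous_fderiv one_ne_zero).clm_apply continuous_const
  have hDsc : Continuous fun p : ℝ × ℝ => Ds p.1 p.2 := by
    simp only [hDsdef]
    exact (hC1.continuous_fderiv one_ne_zero).clm_apply continuous_const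
  -- rewrite the goal derivatives
  have e1 : ∀ t s, deriv (fun u => η u s) t = Dt t s := fun t s => (hDt t s).deriv
  have e2 : ∀ t s, deriv (η t) s = Ds t s := fun t s => (hDs t s).deriv
  simp only [e1, e2]
  set G : ℝ → ℝ := fun t => ∫ s in (0:ℝ)..1, ‖Dt t s‖ ^ 2 with hGdef
  set Λf : ℝ → ℝ := fun t => ∫ u in (0:ℝ)..1, ‖Ds t u‖ with hΛdef
  set Hf : ℝ → ℝ := fun t => ∫ s in (0:ℝ)..1, ‖η t s‖ ^ 2 with hHdef
  set Ff : ℝ → ℝ := fun t => ∫ s in (0:ℝ)..1, ‖η t s - η₀ s‖ ^ 2 with hFdef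
  set Pf : ℝ → ℝ := fun t => ∫ s in (0:ℝ)..1, 2 * (inner ℝ (η t s) (Dt t s) : ℝ) with hPdef
  set Qf : ℝ → ℝ := fun t => ∫ s in (0:ℝ)..1, 2 * (inner ℝ (η t s - η₀ s) (Dt t s) : ℝ) with hQdef
  show (1/2) * min (min L₀ (∫ s in (0:ℝ)..1, ‖η₀ s‖ ^ 2)) 2 ≤
      ∫ t in (0:ℝ)..1, Real.sqrt (G t) * Real.sqrt (Λf t)
  -- continuity facts
  have hcont_etat : ∀ t : ℝ, Continuous fun s => η t s :=
    fun t => hfc.comp (continuous_const.prodMk continuous_id)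
  have hcont_Dtt : ∀ t : ℝ, Continuous fun s => Dt t s :=
    fun t => hDtc.comp (continuous_const.prodMk continuous_id)
  have hη₀c : Continuous η₀ := hη₀.continuous
  have hc_norm2 : Continuous fun p : ℝ × ℝ => ‖η p.1 p.2‖ ^ 2 := hfc.norm.pow 2
  have hc_sub2 : Continuous fun p : ℝ × ℝ => ‖η p.1 p.2 - η₀ p.2‖ ^ 2 :=
    (hfc.sub (hη₀c.comp continuous_snd)).norm.pow 2
  have hc_P : Continuous fun p : ℝ × ℝ => 2 * (inner ℝ (η p.1 p.2) (Dt p.1 p.2) : ℝ) :=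
    continuous_const.mul (hfc.inner hDtc)
  have hc_Q : Continuous fun p : ℝ × ℝ => 2 * (inner ℝ (η p.1 p.2 - η₀ p.2) (Dt p.1 p.2) : ℝ) :=
    continuous_const.mul ((hfc.sub (hη₀c.comp continuous_snd)).inner hDtc)
  have hGc : Continuous G := by
    exact intervalIntegral.continuous_parametric_intervalIntegral_of_continuous'
      (f := fun t s => ‖Dt t s‖ ^ 2) (μ := volume) (by exact hDtc.norm.pow 2) 0 1
  have hΛc : Continuous Λf := by
    exact intervalIntegral.continuous_parametric_intervalIntegral_of_continuous'
      (f := fun t s => ‖Ds t s‖) (μ := volume) (by exact hDsc.norm) 0 1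
  have hHc : Continuous Hf := by
    exact intervalIntegral.continuous_parametric_intervalIntegral_of_continuous'
      (f := fun t s => ‖η t s‖ ^ 2) (μ := volume) (by exact hc_norm2) 0 1
  have hFc : Continuous Ff := by
    exact intervalIntegral.continuous_parametric_intervalIntegral_of_continuous'
      (f := fun t s => ‖η t s - η₀ s‖ ^ 2) (μ := volume) (by exact hc_sub2) 0 1
  have hPc : Continuous Pf := by
    exact intervalIntegral.continuous_parametric_intervalIntegral_of_continuous'
      (f := fun t s => 2 * (inner ℝ (η t s) (Dt t s) : ℝ)) (μ := volume) (by exact hc_P) 0 1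
  have hQc : Continuous Qf := by
    exact intervalIntegral.continuous_parametric_intervalIntegral_of_continuous'
      (f := fun t s => 2 * (inner ℝ (η t s - η₀ s) (Dt t s) : ℝ)) (μ := volume) (by exact hc_Q) 0 1
  -- derivative facts
  have hHd : ∀ t, HasDerivAt Hf (Pf t) t := by
    intro t
    apply param_deriv (fun t s => ‖η t s‖ ^ 2) (fun t s => 2 * (inner ℝ (η t s) (Dt t s) : ℝ))
      ?_ (by exact hc_norm2) (by exact hc_P) t
    intro t s
    show HasDerivAt (fun u => ‖η u s‖ ^ 2) (2 * (inner ℝ (η t s) (Dt t s) : ℝ)) t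
    have hinner : HasDerivAt (fun u => (inner ℝ (η u s) (η u s) : ℝ))
        ((inner ℝ (η t s) (Dt t s) : ℝ) + (inner ℝ (Dt t s) (η t s) : ℝ)) t :=
      HasDerivAt.inner ℝ (hDt t s) (hDt t s)
    have heq : (fun u => ‖η u s‖ ^ 2) = fun u => (inner ℝ (η u s) (η u s) : ℝ) := by
      funext u
      rw [real_inner_self_eq_norm_sq]
    rw [heq]
    have h2 : ((inner ℝ (η t s) (Dt t s) : ℝ) + (inner ℝ (Dt t s) (η t s) : ℝ))
        = 2 * (inner ℝ (η t s) (Dt t s) : ℝ) := by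
      rw [real_inner_comm (Dt t s) (η t s)]
      ring
    rw [← h2]
    exact hinner
  have hFd : ∀ t, HasDerivAt Ff (Qf t) t := by
    intro t
    apply param_deriv (fun t s => ‖η t s - η₀ s‖ ^ 2)
      (fun t s => 2 * (inner ℝ (η t s - η₀ s) (Dt t s) : ℝ))
      ?_ (by exact hc_sub2) (by exact hc_Q) t
    intro t s
    show HasDerivAt (fun u => ‖η u s - η₀ s‖ ^ 2)
      (2 * (inner ℝ (η t s - η₀ s) (Dt t s) : ℝ)) t
    have hd1 : HasDerivAt (fun u => η u s - η₀ s) (Dt t s) t := (hDt t s).sub_const (η₀ s)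
    have hinner : HasDerivAt (fun u => (inner ℝ (η u s - η₀ s) (η u s - η₀ s) : ℝ))
        ((inner ℝ (η t s - η₀ s) (Dt t s) : ℝ) + (inner ℝ (Dt t s) (η t s - η₀ s) : ℝ)) t :=
      HasDerivAt.inner ℝ hd1 hd1
    have heq : (fun u => ‖η u s - η₀ s‖ ^ 2) = fun u => (inner ℝ (η u s - η₀ s) (η u s - η₀ s) : ℝ) := by
      funext u
      rw [real_inner_self_eq_norm_sq]
    rw [heq]
    have h2 : ((inner ℝ (η t s - η₀ s) (Dt t s) : ℝ) + (inner ℝ (Dt t s) (η t s - η₀ s) : ℝ))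
        = 2 * (inner ℝ (η t s - η₀ s) (Dt t s) : ℝ) := by
      rw [real_inner_comm (Dt t s) (η t s - η₀ s)]
      ring
    rw [← h2]
    exact hinner
  -- nonnegativity
  have hG0 : ∀ t, 0 ≤ G t :=
    fun t => intervalIntegral.integral_nonneg (by norm_num) (fun s _ => by positivity)
  have hΛ0 : ∀ t, 0 ≤ Λf t :=
    fun t => intervalIntegral.integral_nonneg (by norm_num) (fun s _ => norm_nonneg _)
  have hH0 : ∀ t, 0 ≤ Hf t :=
    fun t => intervalIntegral.integral_nonneg (by norm_num) (fun s _ => by positivity)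
  have hF0 : ∀ t, 0 ≤ Ff t :=
    fun t => intervalIntegral.integral_nonneg (by norm_num) (fun s _ => by positivity)
  -- Poincaré inequality
  have hHΛ : ∀ t ∈ Set.Icc (0:ℝ) 1, Hf t ≤ (Λf t / 2) ^ 2 := by
    intro t ht
    obtain ⟨hper, hmean, hpos, hconst⟩ := hA t ht
    have e2' : (∫ u in (0:ℝ)..1, ‖deriv (η t) u‖) = Λf t := by simp only [e2]; rfl
    have hb : ∀ s, ‖Ds t s‖ ≤ Λf t := by
      intro s
      have h4 := hconst s
      rw [e2 t s, e2'] at h4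
      exact le_of_eq h4
    have hpt := poincare (η t) (Λf t) (Ds t) (hDs t) hper hmean hb
    have hmono : Hf t ≤ ∫ s in (0:ℝ)..1, (Λf t / 2) ^ 2 := by
      apply intervalIntegral.integral_mono_on (by norm_num)
        (((hcont_etat t).norm.pow 2).intervalIntegrable _ _) intervalIntegrable_const
      intro s _
      exact pow_le_pow_left₀ (norm_nonneg _) (hpt s) 2
    simpa using hmono
  -- Cauchy-Schwarz bounds
  have hPb : ∀ t, |Pf t| ≤ 2 * (Real.sqrt (Hf t) * Real.sqrt (G t)) := by
    intro t
    have e : Pf t = 2 * ∫ s in (0:ℝ)..1, (inner ℝ (η t s) (Dt t s) : ℝ) := by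
      simp only [hPdef]
      rw [← intervalIntegral.integral_const_mul]
    rw [e, abs_mul, abs_two]
    have hcs := cs_inner (fun s => η t s) (fun s => Dt t s) (hcont_etat t) (hcont_Dtt t)
    linarith [hcs]
  have hQb : ∀ t, |Qf t| ≤ 2 * (Real.sqrt (Ff t) * Real.sqrt (G t)) := by
    intro t
    have e : Qf t = 2 * ∫ s in (0:ℝ)..1, (inner ℝ (η t s - η₀ s) (Dt t s) : ℝ) := by
      simp only [hQdef]
      rw [← intervalIntegral.integral_const_mul]
    rw [e, abs_mul, abs_two]
    have hcs := cs_inner (fun s => η t s - η₀ s) (fun s => Dt t s)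
      ((hcont_etat t).sub hη₀c) (hcont_Dtt t)
    linarith [hcs]
  -- endpoint values
  have hFf1 : Ff 1 = 1 := by
    have e : Ff 1 = ∫ s in (0:ℝ)..1, ‖η₀ s - η₁ s‖ ^ 2 := by
      simp only [hFdef, h1]
      apply intervalIntegral.integral_congr
      intro s _
      simp only [norm_sub_rev (η₁ s) (η₀ s)]
    rw [e, hnorm]
  have hFf00 : Ff 0 = 0 := by simp [hFdef, h0]
  have hHf0eq : Hf 0 = ∫ s in (0:ℝ)..1, ‖η₀ s‖ ^ 2 := by simp only [hHdef, h0]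
  clear_value Dt Ds G Λf Hf Ff Pf Qf
  set H0 := ∫ s in (0:ℝ)..1, ‖η₀ s‖ ^ 2 with hH0def
  set m := (1/2) * min (min L₀ H0) 2 with hmdef
  have hH00 : 0 ≤ H0 := by rw [← hHf0eq]; exact hH0 0
  have hm1 : m ≤ 1 := by
    have h := min_le_right (min L₀ H0) 2
    rw [hmdef]
    linarith only [h]
  have h2m : 2 * m ≤ H0 := by
    have ha := min_le_right (min L₀ H0) 2
    have hb := min_le_left (min L₀ H0) 2
    have hd' := min_le_right L₀ H0
    rw [hmdef]
    linarith only [ha, hb, hd']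
  clear_value H0 m
  have hlen0 : 0 ≤ ∫ t in (0:ℝ)..1, Real.sqrt (G t) * Real.sqrt (Λf t) :=
    intervalIntegral.integral_nonneg (by norm_num)
      (fun t _ => mul_nonneg (Real.sqrt_nonneg _) (Real.sqrt_nonneg _))
  rcases le_or_gt m 0 with hm0 | hm0
  · linarith only [hm0, hlen0]
  have hGsc : Continuous fun t => Real.sqrt (G t) := Real.continuous_sqrt.comp hGc
  have hΛsc : Continuous fun t => Real.sqrt (Λf t) := Real.continuous_sqrt.comp hΛc
  have hM0 : 0 ≤ ∫ t in (0:ℝ)..1, Real.sqrt (G t) :=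
    intervalIntegral.integral_nonneg (by norm_num) (fun t _ => Real.sqrt_nonneg _)
  by_cases hcs : ∀ t ∈ Set.Icc (0:ℝ) 1, m ≤ Λf t
  · -- Case 1 : the length stays bounded below
    have step1 : Real.sqrt m * ∫ t in (0:ℝ)..1, Real.sqrt (G t) ≤
        ∫ t in (0:ℝ)..1, Real.sqrt (G t) * Real.sqrt (Λf t) := by
      rw [← intervalIntegral.integral_const_mul]
      apply intervalIntegral.integral_mono_on (by norm_num)
        ((continuous_const.mul hGsc).intervalIntegrable _ _)
        ((hGsc.mul hΛsc).intervalIntegrable _ _)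
      intro t ht
      rw [mul_comm]
      exact mul_le_mul_of_nonneg_left (Real.sqrt_le_sqrt (hcs t ht)) (Real.sqrt_nonneg _)
    have step2 : ∀ ε : ℝ, 0 < ε → 1 - Real.sqrt ε ≤ ∫ t in (0:ℝ)..1, Real.sqrt (G t) := by
      intro ε hε
      have hne : ∀ t : ℝ, Ff t + ε ≠ 0 := fun t => by have := hF0 t; positivity
      have hu : ∀ t : ℝ, HasDerivAt (fun τ => Real.sqrt (Ff τ + ε))
          (Qf t / (2 * Real.sqrt (Ff t + ε))) t :=
        fun t => ((hFd t).add_const ε).sqrt (hne t)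
      have hupos : ∀ t : ℝ, 0 < Real.sqrt (Ff t + ε) :=
        fun t => Real.sqrt_pos.2 (by have := hF0 t; positivity)
      have hu'c : Continuous fun t => Qf t / (2 * Real.sqrt (Ff t + ε)) :=
        hQc.div (continuous_const.mul (Real.continuous_sqrt.comp (hFc.add continuous_const)))
          (fun t => by have := hupos t; positivity)
      have hftc : (∫ t in (0:ℝ)..1, Qf t / (2 * Real.sqrt (Ff t + ε))) =
          Real.sqrt (Ff 1 + ε) - Real.sqrt (Ff 0 + ε) :=
        intervalIntegral.integral_eq_sub_of_hasDerivAt (fun t _ => hu t)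
          (hu'c.intervalIntegrable _ _)
      have hmono : (∫ t in (0:ℝ)..1, Qf t / (2 * Real.sqrt (Ff t + ε))) ≤
          ∫ t in (0:ℝ)..1, Real.sqrt (G t) := by
        apply intervalIntegral.integral_mono_on (by norm_num)
          (hu'c.intervalIntegrable _ _) (hGsc.intervalIntegrable _ _)
        intro t _
        rw [div_le_iff₀ (by have := hupos t; positivity)]
        have hb1 : Qf t ≤ |Qf t| := le_abs_self _
        have hb2 := hQb t
        have hb3 : Real.sqrt (Ff t) ≤ Real.sqrt (Ff t + ε) :=
          Real.sqrt_le_sqrt (by linarith)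
        have hg := Real.sqrt_nonneg (G t)
        have hprod := mul_le_mul_of_nonneg_right hb3 hg
        have hup := hupos t
        nlinarith only [hb1, hb2, hb3, hg, hprod, hup]
      rw [hftc, hFf00, hFf1] at hmono
      have hze : Real.sqrt (0 + ε) = Real.sqrt ε := by norm_num
      rw [hze] at hmono
      have h1e : Real.sqrt 1 ≤ Real.sqrt (1 + ε) := Real.sqrt_le_sqrt (by linarith)
      rw [Real.sqrt_one] at h1e
      linarith only [hmono, h1e]
    apply le_of_forall_pos_le_add
    intro δ hδ
    have h2 := step2 (δ ^ 2) (by positivity)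
    rw [Real.sqrt_sq hδ.le] at h2
    have hsm : m ≤ Real.sqrt m := by
      have hsq : m ^ 2 ≤ m := by nlinarith only [hm0, hm1, mul_nonneg hm0.le (sub_nonneg.2 hm1)]
      calc m = Real.sqrt (m ^ 2) := (Real.sqrt_sq hm0.le).symm
        _ ≤ Real.sqrt m := Real.sqrt_le_sqrt hsq
    have hsm1 : Real.sqrt m ≤ 1 := by
      have h := Real.sqrt_le_sqrt hm1
      rwa [Real.sqrt_one] at h
    have hs0 : 0 ≤ Real.sqrt m := Real.sqrt_nonneg m
    have hp1 : Real.sqrt m * (1 - δ) ≤ Real.sqrt m * ∫ t in (0:ℝ)..1, Real.sqrt (G t) :=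
      mul_le_mul_of_nonneg_left h2 hs0
    have hp2 : Real.sqrt m * δ ≤ 1 * δ := mul_le_mul_of_nonneg_right hsm1 hδ.le
    linarith only [hsm, hp1, hp2, step1, h2]
  · -- Case 2 : the length becomes small somewhere
    push_neg at hcs
    obtain ⟨t₀, ht₀, hΛt₀⟩ := hcs
    have ht₀0 : (0:ℝ) ≤ t₀ := ht₀.1
    have ht₀1 : t₀ ≤ 1 := ht₀.2
    have hHt₀ : Hf t₀ ≤ m ^ 2 / 4 := by
      have hp1 := hHΛ t₀ ht₀
      have hp2 := hΛ0 t₀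
      have hsq : Λf t₀ * Λf t₀ ≤ m * m := mul_le_mul hΛt₀.le hΛt₀.le hp2 (hp2.trans hΛt₀.le)
      nlinarith only [hp1, hsq]
    set M := ∫ t in (0:ℝ)..1, Real.sqrt (G t) with hMdef
    set Lint := ∫ t in (0:ℝ)..1, Real.sqrt (G t) * Real.sqrt (Λf t) with hLintdef
    have hs2pos : (0:ℝ) < Real.sqrt 2 := Real.sqrt_pos.2 two_pos
    apply le_of_forall_pos_le_add
    intro δ hδ
    set K := Real.sqrt 2 * (M + 1) with hKdef
    have hK : 0 < K := by
      rw [hKdef]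
      exact mul_pos hs2pos (by linarith only [hM0])
    set x := min 1 (δ / K) with hxdef
    have hx0 : 0 < x := lt_min one_pos (div_pos hδ hK)
    have hx1 : x ≤ 1 := min_le_left _ _
    set ε := x ^ 4 with hεdef
    have hε0 : 0 < ε := by rw [hεdef]; positivity
    have hε1 : ε ≤ 1 := by
      rw [hεdef]
      calc x ^ 4 ≤ 1 ^ 4 := pow_le_pow_left₀ hx0.le hx1 4
        _ = 1 := one_pow 4
    have hεq : ε ^ ((1:ℝ)/4) = x := by
      rw [hεdef, ← Real.rpow_natCast x 4, ← Real.rpow_mul hx0.le]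
      norm_num
    have hxle : x ≤ δ / K := min_le_right _ _
    clear_value M Lint K x ε
    -- the function v τ = (Hf τ + ε)^(3/4) and its derivative
    have hvpos : ∀ t : ℝ, 0 < Hf t + ε := fun t => by linarith only [hH0 t, hε0]
    have hvd : ∀ t : ℝ, HasDerivAt (fun τ => (Hf τ + ε) ^ ((3:ℝ)/4))
        (Pf t * ((3:ℝ)/4) * (Hf t + ε) ^ ((3:ℝ)/4 - 1)) t :=
      fun t => ((hHd t).add_const ε).rpow_const (Or.inl (hvpos t).ne')
    have hv'c : Continuous fun t => Pf t * ((3:ℝ)/4) * (Hf t + ε) ^ ((3:ℝ)/4 - 1) :=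
      (hPc.mul continuous_const).mul ((hHc.add continuous_const).rpow_const
        (fun t => Or.inl (hvpos t).ne'))
    have hftc : (∫ t in (0:ℝ)..t₀, Pf t * ((3:ℝ)/4) * (Hf t + ε) ^ ((3:ℝ)/4 - 1)) =
        (Hf t₀ + ε) ^ ((3:ℝ)/4) - (Hf 0 + ε) ^ ((3:ℝ)/4) :=
      intervalIntegral.integral_eq_sub_of_hasDerivAt (fun t _ => hvd t)
        (hv'c.intervalIntegrable _ _)
    set c1 : ℝ := 3 / (2 * Real.sqrt 2) with hc1def
    have hc10 : 0 ≤ c1 := by rw [hc1def]; positivity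
    have hc1e : (2 * Real.sqrt 2 / 3) * c1 = 1 := by
      rw [hc1def]
      field_simp
    clear_value c1
    -- pointwise bound on the derivative
    have hbound : ∀ t ∈ Set.Icc (0:ℝ) 1,
        |Pf t * ((3:ℝ)/4) * (Hf t + ε) ^ ((3:ℝ)/4 - 1)| ≤
          c1 * (Real.sqrt (G t) * Real.sqrt (Λf t)) +
            (3/2) * ε ^ ((1:ℝ)/4) * Real.sqrt (G t) := by
      intro t ht
      have hh : 0 < Hf t + ε := hvpos t
      have hG0' : (0:ℝ) ≤ Real.sqrt (G t) := Real.sqrt_nonneg _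
      have hr0 : (0:ℝ) ≤ (Hf t + ε) ^ ((3:ℝ)/4 - 1) := Real.rpow_nonneg hh.le _
      have hPb' : |Pf t| ≤ 2 * (Real.sqrt (Hf t + ε) * Real.sqrt (G t)) := by
        have hb2 := hPb t
        have hmono : Real.sqrt (Hf t) ≤ Real.sqrt (Hf t + ε) :=
          Real.sqrt_le_sqrt (by linarith only [hε0.le])
        have hprod := mul_le_mul_of_nonneg_right hmono hG0'
        nlinarith only [hb2, hprod]
      have hid : Real.sqrt (Hf t + ε) * (Hf t + ε) ^ ((3:ℝ)/4 - 1) =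
          (Hf t + ε) ^ ((1:ℝ)/4) := by
        rw [Real.sqrt_eq_rpow, ← Real.rpow_add hh]
        norm_num
      have hq : (Hf t + ε) ^ ((1:ℝ)/4) ≤
          Real.sqrt (Λf t) / Real.sqrt 2 + ε ^ ((1:ℝ)/4) := by
        have h1' : Hf t + ε ≤ (Λf t / 2) ^ 2 + ε := by linarith only [hHΛ t ht]
        have h2' : (Hf t + ε) ^ ((1:ℝ)/4) ≤ ((Λf t / 2) ^ 2 + ε) ^ ((1:ℝ)/4) :=
          Real.rpow_le_rpow hh.le h1' (by norm_num)
        have h3' : ((Λf t / 2) ^ 2 + ε) ^ ((1:ℝ)/4) ≤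
            ((Λf t / 2) ^ 2) ^ ((1:ℝ)/4) + ε ^ ((1:ℝ)/4) :=
          rpow_subadd (by positivity) hε0.le (by norm_num) (by norm_num)
        have h4' : ((Λf t / 2) ^ 2) ^ ((1:ℝ)/4) = Real.sqrt (Λf t) / Real.sqrt 2 := by
          have hΛ2 : (0:ℝ) ≤ Λf t / 2 := by linarith only [hΛ0 t]
          rw [← Real.rpow_natCast (Λf t / 2) 2, ← Real.rpow_mul hΛ2]
          norm_num
          rw [← Real.sqrt_eq_rpow, Real.sqrt_div (hΛ0 t)]
        rw [h4'] at h3'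
        linarith only [h2', h3']
      have habs : |Pf t * ((3:ℝ)/4) * (Hf t + ε) ^ ((3:ℝ)/4 - 1)| =
          |Pf t| * ((3:ℝ)/4) * (Hf t + ε) ^ ((3:ℝ)/4 - 1) := by
        rw [abs_mul, abs_mul, abs_of_nonneg (by norm_num : (0:ℝ) ≤ (3:ℝ)/4),
          abs_of_nonneg hr0]
      have step : |Pf t| * ((3:ℝ)/4) * (Hf t + ε) ^ ((3:ℝ)/4 - 1) ≤
          (3/2) * Real.sqrt (G t) * (Hf t + ε) ^ ((1:ℝ)/4) := by
        calc |Pf t| * ((3:ℝ)/4) * (Hf t + ε) ^ ((3:ℝ)/4 - 1)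
            ≤ (2 * (Real.sqrt (Hf t + ε) * Real.sqrt (G t))) * ((3:ℝ)/4) *
              (Hf t + ε) ^ ((3:ℝ)/4 - 1) :=
              mul_le_mul_of_nonneg_right
                (mul_le_mul_of_nonneg_right hPb' (by norm_num)) hr0
          _ = (3/2) * Real.sqrt (G t) *
              (Real.sqrt (Hf t + ε) * (Hf t + ε) ^ ((3:ℝ)/4 - 1)) := by ring
          _ = (3/2) * Real.sqrt (G t) * (Hf t + ε) ^ ((1:ℝ)/4) := by rw [hid]
      have step2 : (3/2) * Real.sqrt (G t) * (Hf t + ε) ^ ((1:ℝ)/4) ≤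
          (3/2) * Real.sqrt (G t) * (Real.sqrt (Λf t) / Real.sqrt 2 + ε ^ ((1:ℝ)/4)) :=
        mul_le_mul_of_nonneg_left hq (by positivity)
      have efin : (3/2) * Real.sqrt (G t) * (Real.sqrt (Λf t) / Real.sqrt 2 + ε ^ ((1:ℝ)/4)) =
          c1 * (Real.sqrt (G t) * Real.sqrt (Λf t)) +
            (3/2) * ε ^ ((1:ℝ)/4) * Real.sqrt (G t) := by
        rw [hc1def]
        field_simp
      rw [habs, ← efin]
      linarith only [step, step2]
    -- integrate the bound
    have hbc : Continuous fun t => c1 * (Real.sqrt (G t) * Real.sqrt (Λf t)) +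
        (3/2) * ε ^ ((1:ℝ)/4) * Real.sqrt (G t) :=
      (continuous_const.mul (hGsc.mul hΛsc)).add (continuous_const.mul hGsc)
    have hbnn : ∀ t : ℝ, 0 ≤ c1 * (Real.sqrt (G t) * Real.sqrt (Λf t)) +
        (3/2) * ε ^ ((1:ℝ)/4) * Real.sqrt (G t) := by
      intro t
      have h1' : (0:ℝ) ≤ ε ^ ((1:ℝ)/4) := Real.rpow_nonneg hε0.le _
      have h2' : (0:ℝ) ≤ Real.sqrt (G t) := Real.sqrt_nonneg _
      have h3' : (0:ℝ) ≤ Real.sqrt (Λf t) := Real.sqrt_nonneg _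
      positivity
    have hint1 : (Hf 0 + ε) ^ ((3:ℝ)/4) - (Hf t₀ + ε) ^ ((3:ℝ)/4) ≤
        ∫ t in (0:ℝ)..1, (c1 * (Real.sqrt (G t) * Real.sqrt (Λf t)) +
          (3/2) * ε ^ ((1:ℝ)/4) * Real.sqrt (G t)) := by
      have e1' : (Hf 0 + ε) ^ ((3:ℝ)/4) - (Hf t₀ + ε) ^ ((3:ℝ)/4) =
          -(∫ t in (0:ℝ)..t₀, Pf t * ((3:ℝ)/4) * (Hf t + ε) ^ ((3:ℝ)/4 - 1)) := by
        rw [hftc]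
        ring
      have h2' : -(∫ t in (0:ℝ)..t₀, Pf t * ((3:ℝ)/4) * (Hf t + ε) ^ ((3:ℝ)/4 - 1)) ≤
          ∫ t in (0:ℝ)..t₀, |Pf t * ((3:ℝ)/4) * (Hf t + ε) ^ ((3:ℝ)/4 - 1)| := by
        have ha := intervalIntegral.abs_integral_le_integral_abs (μ := volume)
          (f := fun t => Pf t * ((3:ℝ)/4) * (Hf t + ε) ^ ((3:ℝ)/4 - 1))
          (a := 0) (b := t₀) ht₀0
        have hb := neg_abs_le (∫ t in (0:ℝ)..t₀, Pf t * ((3:ℝ)/4) * (Hf t + ε) ^ ((3:ℝ)/4 - 1))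
        linarith only [ha, hb]
      have h3' : (∫ t in (0:ℝ)..t₀, |Pf t * ((3:ℝ)/4) * (Hf t + ε) ^ ((3:ℝ)/4 - 1)|) ≤
          ∫ t in (0:ℝ)..t₀, (c1 * (Real.sqrt (G t) * Real.sqrt (Λf t)) +
            (3/2) * ε ^ ((1:ℝ)/4) * Real.sqrt (G t)) := by
        apply intervalIntegral.integral_mono_on ht₀0
          (hv'c.abs.intervalIntegrable _ _) (hbc.intervalIntegrable _ _)
        intro t ht
        exact hbound t ⟨ht.1, ht.2.trans ht₀1⟩
      have h4' : (∫ t in (0:ℝ)..t₀, (c1 * (Real.sqrt (G t) * Real.sqrt (Λf t)) +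
            (3/2) * ε ^ ((1:ℝ)/4) * Real.sqrt (G t))) ≤
          ∫ t in (0:ℝ)..1, (c1 * (Real.sqrt (G t) * Real.sqrt (Λf t)) +
            (3/2) * ε ^ ((1:ℝ)/4) * Real.sqrt (G t)) := by
        have hsplit := intervalIntegral.integral_add_adjacent_intervals
          (a := (0:ℝ)) (b := t₀) (c := 1) (μ := volume)
          (f := fun t => c1 * (Real.sqrt (G t) * Real.sqrt (Λf t)) +
            (3/2) * ε ^ ((1:ℝ)/4) * Real.sqrt (G t))
          (hbc.intervalIntegrable _ _) (hbc.intervalIntegrable _ _)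
        have hnn : 0 ≤ ∫ t in t₀..1, (c1 * (Real.sqrt (G t) * Real.sqrt (Λf t)) +
            (3/2) * ε ^ ((1:ℝ)/4) * Real.sqrt (G t)) :=
          intervalIntegral.integral_nonneg ht₀1 (fun t _ => hbnn t)
        linarith only [hsplit, hnn]
      linarith only [e1', h2', h3', h4']
    have hsum : (∫ t in (0:ℝ)..1, (c1 * (Real.sqrt (G t) * Real.sqrt (Λf t)) +
          (3/2) * ε ^ ((1:ℝ)/4) * Real.sqrt (G t))) =
        c1 * Lint + (3/2) * ε ^ ((1:ℝ)/4) * M := by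
      rw [hLintdef, hMdef]
      rw [intervalIntegral.integral_add (f := fun t => c1 * (Real.sqrt (G t) * Real.sqrt (Λf t)))
        (g := fun t => (3/2) * ε ^ ((1:ℝ)/4) * Real.sqrt (G t))
        ((continuous_const.mul (hGsc.mul hΛsc)).intervalIntegrable _ _)
        ((continuous_const.mul hGsc).intervalIntegrable _ _),
        intervalIntegral.integral_const_mul, intervalIntegral.integral_const_mul]
    -- endpoint comparisons
    have hv0 : H0 ^ ((3:ℝ)/4) ≤ (Hf 0 + ε) ^ ((3:ℝ)/4) := by
      apply Real.rpow_le_rpow hH00 _ (by norm_num)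
      rw [hHf0eq]
      linarith only [hε0.le]
    have hvt : (Hf t₀ + ε) ^ ((3:ℝ)/4) ≤ (m ^ 2 / 4) ^ ((3:ℝ)/4) + ε ^ ((3:ℝ)/4) := by
      calc (Hf t₀ + ε) ^ ((3:ℝ)/4) ≤ (m ^ 2 / 4 + ε) ^ ((3:ℝ)/4) :=
            Real.rpow_le_rpow (hvpos t₀).le (by linarith only [hHt₀]) (by norm_num)
        _ ≤ (m ^ 2 / 4) ^ ((3:ℝ)/4) + ε ^ ((3:ℝ)/4) :=
            rpow_subadd (by positivity) hε0.le (by norm_num) (by norm_num)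
    -- the numeric inequality
    have f1 : (2:ℝ) ^ ((3:ℝ)/4) * m ^ ((3:ℝ)/4) ≤ H0 ^ ((3:ℝ)/4) := by
      have h := Real.rpow_le_rpow (by linarith only [hm0] : (0:ℝ) ≤ 2 * m) h2m (by norm_num : (0:ℝ) ≤ 3/4)
      rwa [Real.mul_rpow (by norm_num) hm0.le] at h
    have f3 : (m ^ 2 / 4) ^ ((3:ℝ)/4) ≤ m ^ ((3:ℝ)/4) / (2:ℝ) ^ ((3:ℝ)/2) := by
      have e : (m ^ 2 / 4) ^ ((3:ℝ)/4) = (m / 2) ^ ((3:ℝ)/2) := by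
        have e0 : m ^ 2 / 4 = (m / 2) ^ 2 := by ring
        rw [e0, ← Real.rpow_natCast (m / 2) 2, ← Real.rpow_mul (by linarith only [hm0] : (0:ℝ) ≤ m / 2)]
        norm_num
      rw [e, Real.div_rpow hm0.le (by norm_num)]
      have hnum : m ^ ((3:ℝ)/2) ≤ m ^ ((3:ℝ)/4) :=
        Real.rpow_le_rpow_of_exponent_ge hm0 hm1 (by norm_num)
      have hden : (0:ℝ) < (2:ℝ) ^ ((3:ℝ)/2) := Real.rpow_pos_of_pos two_pos _
      gcongr
    have f4 : m ≤ m ^ ((3:ℝ)/4) := by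
      have h := Real.rpow_le_rpow_of_exponent_ge hm0 hm1 (by norm_num : (3:ℝ)/4 ≤ 1)
      rwa [Real.rpow_one] at h
    have hc1' : 1 ≤ (2 * Real.sqrt 2 / 3) * ((2:ℝ) ^ ((3:ℝ)/4) - 1 / (2:ℝ) ^ ((3:ℝ)/2)) := by
      have hsa : (2:ℝ) ≤ Real.sqrt 2 * (2:ℝ) ^ ((3:ℝ)/4) := by
        rw [Real.sqrt_eq_rpow, ← Real.rpow_add two_pos]
        calc (2:ℝ) = (2:ℝ) ^ (1:ℝ) := (Real.rpow_one 2).symm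
          _ ≤ (2:ℝ) ^ (1/2 + 3/4 : ℝ) :=
            Real.rpow_le_rpow_of_exponent_le (by norm_num) (by norm_num)
      have hb2 : (2:ℝ) ^ ((3:ℝ)/2) = 2 * Real.sqrt 2 := by
        rw [Real.sqrt_eq_rpow, show ((3:ℝ)/2) = 1 + 1/2 by norm_num,
          Real.rpow_add two_pos, Real.rpow_one]
      rw [hb2]
      have e : (2 * Real.sqrt 2 / 3) * ((2:ℝ) ^ ((3:ℝ)/4) - 1 / (2 * Real.sqrt 2)) =
          (2 * (Real.sqrt 2 * (2:ℝ) ^ ((3:ℝ)/4)) - 1) / 3 := by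
        field_simp
      rw [e]
      rw [le_div_iff₀ (by norm_num : (0:ℝ) < 3)]
      linarith only [hsa]
    have hnum : m ≤ (2 * Real.sqrt 2 / 3) * (H0 ^ ((3:ℝ)/4) - (m ^ 2 / 4) ^ ((3:ℝ)/4)) := by
      have hr0 : (0:ℝ) ≤ m ^ ((3:ℝ)/4) := Real.rpow_nonneg hm0.le _
      have hdiff : m ^ ((3:ℝ)/4) * ((2:ℝ) ^ ((3:ℝ)/4) - 1 / (2:ℝ) ^ ((3:ℝ)/2)) ≤
          H0 ^ ((3:ℝ)/4) - (m ^ 2 / 4) ^ ((3:ℝ)/4) := by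
        have e : m ^ ((3:ℝ)/4) * ((2:ℝ) ^ ((3:ℝ)/4) - 1 / (2:ℝ) ^ ((3:ℝ)/2)) =
            (2:ℝ) ^ ((3:ℝ)/4) * m ^ ((3:ℝ)/4) -
              m ^ ((3:ℝ)/4) / (2:ℝ) ^ ((3:ℝ)/2) := by ring
        rw [e]
        linarith only [f1, f3]
      calc m ≤ m ^ ((3:ℝ)/4) := f4
        _ = 1 * m ^ ((3:ℝ)/4) := (one_mul _).symm
        _ ≤ ((2 * Real.sqrt 2 / 3) * ((2:ℝ) ^ ((3:ℝ)/4) - 1 / (2:ℝ) ^ ((3:ℝ)/2))) *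
            m ^ ((3:ℝ)/4) := mul_le_mul_of_nonneg_right hc1' hr0
        _ = (2 * Real.sqrt 2 / 3) *
            (m ^ ((3:ℝ)/4) * ((2:ℝ) ^ ((3:ℝ)/4) - 1 / (2:ℝ) ^ ((3:ℝ)/2))) := by ring
        _ ≤ (2 * Real.sqrt 2 / 3) * (H0 ^ ((3:ℝ)/4) - (m ^ 2 / 4) ^ ((3:ℝ)/4)) :=
            mul_le_mul_of_nonneg_left hdiff (by positivity)
    -- assemble everything
    have hεq34 : ε ^ ((3:ℝ)/4) ≤ ε ^ ((1:ℝ)/4) :=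
      Real.rpow_le_rpow_of_exponent_ge hε0 hε1 (by norm_num)
    have hup : (Hf 0 + ε) ^ ((3:ℝ)/4) - (Hf t₀ + ε) ^ ((3:ℝ)/4) ≤
        c1 * Lint + (3/2) * ε ^ ((1:ℝ)/4) * M := by
      rw [← hsum]
      exact hint1
    have hA1 : m ≤ (2 * Real.sqrt 2 / 3) *
        (c1 * Lint + (3/2) * ε ^ ((1:ℝ)/4) * M + ε ^ ((3:ℝ)/4)) := by
      have hd2 : H0 ^ ((3:ℝ)/4) - (m ^ 2 / 4) ^ ((3:ℝ)/4) ≤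
          c1 * Lint + (3/2) * ε ^ ((1:ℝ)/4) * M + ε ^ ((3:ℝ)/4) := by linarith only [hup, hv0, hvt]
      calc m ≤ (2 * Real.sqrt 2 / 3) * (H0 ^ ((3:ℝ)/4) - (m ^ 2 / 4) ^ ((3:ℝ)/4)) := hnum
        _ ≤ (2 * Real.sqrt 2 / 3) *
            (c1 * Lint + (3/2) * ε ^ ((1:ℝ)/4) * M + ε ^ ((3:ℝ)/4)) :=
            mul_le_mul_of_nonneg_left hd2 (by positivity)
    have hA2 : (2 * Real.sqrt 2 / 3) *
        (c1 * Lint + (3/2) * ε ^ ((1:ℝ)/4) * M + ε ^ ((3:ℝ)/4)) =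
        Lint + Real.sqrt 2 * ε ^ ((1:ℝ)/4) * M +
          (2 * Real.sqrt 2 / 3) * ε ^ ((3:ℝ)/4) := by
      linear_combination Lint * hc1e
    have hA3 : Real.sqrt 2 * ε ^ ((1:ℝ)/4) * M +
        (2 * Real.sqrt 2 / 3) * ε ^ ((3:ℝ)/4) ≤ K * x := by
      rw [hKdef, ← hεq]
      have h1' : (2 * Real.sqrt 2 / 3) * ε ^ ((3:ℝ)/4) ≤ Real.sqrt 2 * ε ^ ((1:ℝ)/4) := by
        apply mul_le_mul (by linarith only [hs2pos.le]) hεq34 (Real.rpow_nonneg hε0.le _) hs2pos.le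
      linarith only [h1']
    have hA4 : K * x ≤ δ := by
      calc K * x ≤ K * (δ / K) := mul_le_mul_of_nonneg_left hxle hK.le
        _ = δ := by field_simp
    linarith only [hA1, hA2, hA3, hA4]
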